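/- Guessing probability bound from min-entropy: for a cq-state ρ_AB = Σ_a p(a)|a⟩⟨a|_A ⊗ ρ_B^a with H_min(A|B)_ρ ≥ k, every POVM {M_a} on B satisfies Σ_a p(a) tr(M_a ρ_B^a) ≤ 2^{-k}. -/

import Mathlib

open Matrix Kronecker BigOperators Finset
open scoped ComplexOrder

/-- Trace distance: half the trace norm of the difference. -/
noncomputable def traceDist {d : Type*} [Fintype d] [DecidableEq d]
    (ρ σ : Matrix d d ℂ) : ℝ :=
  let h := (Matrix.posSemidef_conjTranspose_mul_self (ρ - σ)).1
  (((h.eigenvectorUnitary : Matrix d d ℂ) *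
    diagonal (fun i => ((Real.sqrt (h.eigenvalues i) : ℝ) : ℂ)) *
    (star h.eigenvectorUnitary : Matrix d d ℂ)).trace).re / 2

/-- A density operator: positive semidefinite with unit trace. -/
def IsDensity {d : Type*} [Fintype d] [DecidableEq d] (ρ : Matrix d d ℂ) : Prop :=
  ρ.PosSemidef ∧ ρ.trace = 1

/-- Rank-one projection `|v⟩⟨v|` onto a vector. -/
def proj {d : Type*} [Fintype d] [DecidableEq d] (v : d → ℂ) : Matrix d d ℂ :=
  Matrix.vecMulVec v (star v)

/-- A unit vector. -/
def IsUnit' {d : Type*} [Fintype d] (v : d → ℂ) : Prop :=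
  dotProduct (star v) v = 1

/-- Partial trace over the second tensor factor. -/
noncomputable def ptraceY {X Y : Type*} [Fintype X] [Fintype Y] [DecidableEq X] [DecidableEq Y]
    (ρ : Matrix (X × Y) (X × Y) ℂ) : Matrix X X ℂ :=
  fun x x' => ∑ y : Y, ρ (x, y) (x', y)

/-- Conditional quantum min-entropy:
`H_min(A|B)_ρ = -inf_{σ_B density} inf {λ : ρ_AB ≤ 2^λ I_A ⊗ σ_B}`. -/
noncomputable def condMinEntropy {A B : Type*} [Fintype A] [Fintype B]
    [DecidableEq A] [DecidableEq B] (ρ : Matrix (A × B) (A × B) ℂ) : ℝ :=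
  - sInf {lam : ℝ | ∃ σ : Matrix B B ℂ, IsDensity σ ∧
      (((2 : ℝ) ^ lam • ((1 : Matrix A A ℂ) ⊗ₖ σ)) - ρ).PosSemidef}

/-- A cq-state `Σ_a p(a) |a⟩⟨a| ⊗ ρ_B^a`. -/
noncomputable def cqState {A B : Type*} [Fintype A] [Fintype B]
    [DecidableEq A] [DecidableEq B]
    (p : A → ℝ) (ρB : A → Matrix B B ℂ) : Matrix (A × B) (A × B) ℂ :=
  ∑ a : A, (p a : ℂ) • (proj (fun x => if x = a then 1 else 0) ⊗ₖ ρB a)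

lemma trace_re_nonneg {d : Type*} [Fintype d] [DecidableEq d] {X : Matrix d d ℂ}
    (hX : X.PosSemidef) : 0 ≤ X.trace.re := by
  have : X.trace.re = ∑ i, (X i i).re := by
    simp [Matrix.trace, Matrix.diag, Complex.re_sum]
  rw [this]
  refine Finset.sum_nonneg fun i _ => ?_
  have := hX.re_dotProduct_nonneg (Pi.single i 1)
  simpa [dotProduct, Matrix.mulVec, Pi.single_apply, Finset.sum_ite_eq'] using this

lemma trace_mul_re_nonneg {d : Type*} [Fintype d] [DecidableEq d] {X Y : Matrix d d ℂ}
    (hX : X.PosSemidef) (hY : Y.PosSemidef) : 0 ≤ ((X * Y).trace).re := by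
  open scoped MatrixOrder in
  obtain ⟨b, rfl⟩ := CStarAlgebra.nonneg_iff_eq_star_mul_self.mp hY.nonneg
  have h : (X * (star b * b)).trace = (b * X * bᴴ).trace := by
    rw [Matrix.star_eq_conjTranspose, ← Matrix.mul_assoc, Matrix.trace_mul_cycle]
  rw [h]
  refine trace_re_nonneg ?_
  exact hX.mul_mul_conjTranspose_same b

lemma kron_conjTranspose {m n : Type*} (A : Matrix m m ℂ) (B : Matrix n n ℂ) :
    (A ⊗ₖ B)ᴴ = Aᴴ ⊗ₖ Bᴴ := by
  ext ⟨i, j⟩ ⟨k, l⟩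
  simp [Matrix.conjTranspose_apply, mul_comm]

lemma PosSemidef.kron {m n : Type*} [Fintype m] [Fintype n] [DecidableEq m] [DecidableEq n]
    {A : Matrix m m ℂ} {B : Matrix n n ℂ} (hA : A.PosSemidef) (hB : B.PosSemidef) :
    (A ⊗ₖ B).PosSemidef := by
  exact hA.kronecker hB

lemma proj_posSemidef {d : Type*} [Fintype d] [DecidableEq d] (v : d → ℂ) :
    (proj v).PosSemidef := by
  have : proj v = (Matrix.of fun (_ : Unit) j => star (v j))ᴴ *
      (Matrix.of fun (_ : Unit) j => star (v j)) := by
    ext i j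
    simp [proj, Matrix.vecMulVec, Matrix.mul_apply, Matrix.conjTranspose_apply, mul_comm]
  rw [this]
  exact Matrix.posSemidef_conjTranspose_mul_self _

lemma trace_proj_mul_proj {d : Type*} [Fintype d] [DecidableEq d] (a b : d) :
    ((proj (fun x => if x = a then (1:ℂ) else 0)) *
      (proj (fun x => if x = b then (1:ℂ) else 0))).trace = if a = b then 1 else 0 := by
  simp [proj, Matrix.vecMulVec, Matrix.trace, Matrix.diag, Matrix.mul_apply, apply_ite (star : ℂ → ℂ),
    Finset.sum_ite_eq', ite_and, eq_comm]

lemma trace_proj {d : Type*} [Fintype d] [DecidableEq d] (a : d) :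
    (proj (fun x => if x = a then (1:ℂ) else 0)).trace = 1 := by
  simp [proj, Matrix.vecMulVec, Matrix.trace, Matrix.diag, apply_ite (star : ℂ → ℂ),
    Finset.sum_ite_eq']


lemma posSemidef_sum {d ι : Type*} [Fintype d] [DecidableEq d] (s : Finset ι)
    (f : ι → Matrix d d ℂ) (h : ∀ i ∈ s, (f i).PosSemidef) : (∑ i ∈ s, f i).PosSemidef :=
  Finset.sum_induction f _ (fun _ _ ha hb => ha.add hb) Matrix.PosSemidef.zero h

lemma core_bound {A B : Type*} [Fintype A] [Fintype B] [DecidableEq A] [DecidableEq B]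
    (p : A → ℝ) (ρB : A → Matrix B B ℂ)
    (M : A → Matrix B B ℂ) (hM : ∀ a, (M a).PosSemidef) (hM1 : ∑ a, M a = 1)
    (lam : ℝ) (σ : Matrix B B ℂ) (hσ : IsDensity σ)
    (hpos : (((2:ℝ)^lam • ((1 : Matrix A A ℂ) ⊗ₖ σ)) - cqState p ρB).PosSemidef) :
    ∑ a, p a * ((M a * ρB a).trace).re ≤ (2:ℝ)^lam := by
  set N : Matrix (A×B) (A×B) ℂ :=
    ∑ a, proj (fun x => if x = a then (1:ℂ) else 0) ⊗ₖ M a with hN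
  have hNpsd : N.PosSemidef :=
    posSemidef_sum _ _ fun a _ => PosSemidef.kron (proj_posSemidef _) (hM a)
  have key := trace_mul_re_nonneg hNpsd hpos
  have h1 : (N * cqState p ρB).trace = ∑ a, (p a : ℂ) * (M a * ρB a).trace := by
    have step : (N * cqState p ρB).trace
        = ∑ a, ∑ b, (p b : ℂ) * (((proj (fun x => if x = a then (1:ℂ) else 0) *
            proj (fun x => if x = b then (1:ℂ) else 0)).trace) * (M a * ρB b).trace) := by
      simp only [hN, cqState, Matrix.sum_mul, Matrix.mul_sum, Matrix.trace_sum,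
        Matrix.mul_smul, Matrix.trace_smul, ← Matrix.mul_kronecker_mul,
        Matrix.trace_kronecker, smul_eq_mul]
      rw [Finset.sum_comm]
      exact Finset.sum_congr rfl fun a _ => Finset.mul_sum _ _ _
    rw [step]
    refine Finset.sum_congr rfl fun a _ => ?_
    rw [Finset.sum_eq_single a]
    · rw [trace_proj_mul_proj]; simp
    · intro b _ hb
      rw [trace_proj_mul_proj]
      simp [(Ne.symm hb)]
    · simp
  have h2 : (N * ((2:ℝ)^lam • ((1 : Matrix A A ℂ) ⊗ₖ σ))).trace = (((2:ℝ)^lam : ℝ) : ℂ) := by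
    rw [Matrix.mul_smul, Matrix.trace_smul, hN, Matrix.sum_mul, Matrix.trace_sum]
    simp only [← Matrix.mul_kronecker_mul, Matrix.mul_one, Matrix.trace_kronecker,
      trace_proj, one_mul]
    rw [← Matrix.trace_sum, ← Finset.sum_mul, hM1, Matrix.one_mul, hσ.2,
      Complex.real_smul, mul_one]
  have hsplit : (N * (((2:ℝ)^lam • ((1 : Matrix A A ℂ) ⊗ₖ σ)) - cqState p ρB)).trace
      = (((2:ℝ)^lam : ℝ) : ℂ) - ∑ a, (p a : ℂ) * (M a * ρB a).trace := by
    rw [Matrix.mul_sub, Matrix.trace_sub, h1, h2]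
  rw [hsplit] at key
  have hre : ((∑ a, (p a : ℂ) * (M a * ρB a).trace).re)
      = ∑ a, p a * ((M a * ρB a).trace).re := by
    rw [Complex.re_sum]
    exact Finset.sum_congr rfl fun a _ => by rw [Complex.re_ofReal_mul]
  rw [Complex.sub_re, Complex.ofReal_re, hre] at key
  linarith

/-- Guessing probability bound from min-entropy: if `H_min(A|B)_ρ ≥ k` for a
cq-state, then every POVM on `B` guesses `A` with probability at most `2^{-k}`. -/
theorem guessing_prob_le_of_minEntropy
    {A B : Type*} [Fintype A] [Fintype B] [DecidableEq A] [DecidableEq B]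
    (p : A → ℝ) (hp : ∀ a, 0 ≤ p a) (hp1 : ∑ a, p a = 1)
    (ρB : A → Matrix B B ℂ) (hρB : ∀ a, IsDensity (ρB a))
    (k : ℝ) (hk : k ≤ condMinEntropy (cqState p ρB))
    (M : A → Matrix B B ℂ) (hM : ∀ a, (M a).PosSemidef) (hM1 : ∑ a, M a = 1) :
    ∑ a, p a * ((M a * ρB a).trace).re ≤ (2 : ℝ) ^ (-k) := by
  set G := ∑ a, p a * ((M a * ρB a).trace).re with hGdef
  set S : Set ℝ := {lam : ℝ | ∃ σ : Matrix B B ℂ, IsDensity σ ∧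
      (((2 : ℝ) ^ lam • ((1 : Matrix A A ℂ) ⊗ₖ σ)) - cqState p ρB).PosSemidef} with hSdef
  have hkS : sInf S ≤ -k := by
    have : k ≤ - sInf S := hk
    linarith
  have hG1 : G ≤ 1 := by
    rw [hGdef, ← hp1]
    refine Finset.sum_le_sum fun a _ => ?_
    have h1ma : ((1 : Matrix B B ℂ) - M a).PosSemidef := by
      rw [← hM1, ← Finset.sum_erase_add _ _ (Finset.mem_univ a), add_sub_cancel_right]
      exact posSemidef_sum _ _ fun b _ => hM b
    have h := trace_mul_re_nonneg h1ma (hρB a).1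
    have htr : (((1 : Matrix B B ℂ) - M a) * ρB a).trace
        = (ρB a).trace - (M a * ρB a).trace := by
      rw [Matrix.sub_mul, Matrix.one_mul, Matrix.trace_sub]
    rw [htr, (hρB a).2] at h
    have hle : ((M a * ρB a).trace).re ≤ 1 := by
      have := Complex.sub_re (1 : ℂ) ((M a * ρB a).trace)
      simp [Complex.sub_re] at h
      linarith
    calc p a * ((M a * ρB a).trace).re ≤ p a * 1 := by
          exact mul_le_mul_of_nonneg_left hle (hp a)
      _ = p a := mul_one _
  have hGpos2k : (0:ℝ) < (2:ℝ) ^ (-k) := Real.rpow_pos_of_pos (by norm_num) _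
  by_cases hSne : S.Nonempty
  · by_cases hGpos : 0 < G
    · have hlb : ∀ lam ∈ S, Real.logb 2 G ≤ lam := by
        intro lam hlam
        obtain ⟨σ, hσ, hpos⟩ := hlam
        have := core_bound p ρB M hM hM1 lam σ hσ hpos
        rw [Real.logb_le_iff_le_rpow (by norm_num) hGpos]
        exact this
      have h₁ : Real.logb 2 G ≤ sInf S := le_csInf hSne hlb
      have h₂ : Real.logb 2 G ≤ -k := le_trans h₁ hkS
      calc G = (2:ℝ) ^ (Real.logb 2 G) := (Real.rpow_logb (by norm_num) (by norm_num) hGpos).symm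
        _ ≤ (2:ℝ) ^ (-k) := Real.rpow_le_rpow_left_iff (by norm_num) |>.mpr h₂
    · push_neg at hGpos
      linarith
  · have hSempty : S = ∅ := Set.not_nonempty_iff_eq_empty.mp hSne
    have : sInf S = 0 := by rw [hSempty]; exact Real.sInf_empty
    rw [this] at hkS
    have h2k : (1:ℝ) ≤ (2:ℝ) ^ (-k) := by
      rw [show (1:ℝ) = (2:ℝ) ^ (0:ℝ) by simp [Real.rpow_zero]]
      exact Real.rpow_le_rpow_left_iff (by norm_num) |>.mpr (by linarith)
    linarith
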